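/- arXiv:0912.1186 — 3 statements merged into one kernel-verified Lean document; each statement's English description precedes it below -/
import Mathlib

section
/- Let a be a finite complex measure on ℝ with total mass a(ℝ) = 0 and with finite first moment ∫ |τ| d‖a‖(τ) < ∞, where ‖a‖ is the total variation measure. Then the function F(s) = a((−∞, s]) is integrable on ℝ, and ∫ |F(s)| ds ≤ ∫ |τ| d‖a‖(τ). -/
open MeasureTheory Filter Topology Set
open scoped ENNReal NNReal

private lemma meas_cdf (μ : Measure ℝ) (f : ℝ → ℂ) (hf : Integrable f μ) :
    Measurable (fun s => ∫ τ in Set.Iic s, f τ ∂μ) := by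
  have key : ∀ g : ℝ → ℝ, Integrable g μ →
      Measurable (fun s => ∫ τ in Set.Iic s, g τ ∂μ) := by
    intro g hg
    have hmono : ∀ h : ℝ → ℝ, Integrable h μ → (∀ x, 0 ≤ h x) →
        Monotone (fun s => ∫ τ in Set.Iic s, h τ ∂μ) := by
      intro h hh h0 s t hst
      exact setIntegral_mono_set hh.integrableOn
        (Eventually.of_forall fun x => h0 x)
        (HasSubset.Subset.eventuallyLE (Iic_subset_Iic.2 hst))
    have hP := hmono _ hg.pos_part (fun x => le_max_right _ _)
    have hN := hmono _ hg.neg_part (fun x => le_max_right _ _)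
    have : (fun s => ∫ τ in Set.Iic s, g τ ∂μ) =
        fun s => (∫ τ in Set.Iic s, (g τ ⊔ 0) ∂μ) - ∫ τ in Set.Iic s, (-g τ ⊔ 0) ∂μ := by
      funext s
      rw [← integral_sub hg.pos_part.integrableOn hg.neg_part.integrableOn]
      exact (integral_congr_ae (Eventually.of_forall fun x =>
        (max_zero_sub_max_neg_zero_eq_self (g x)).symm))
    rw [this]
    exact (hP.measurable).sub (hN.measurable)
  have heq : (fun s => ∫ τ in Set.Iic s, f τ ∂μ) =
      fun s => ((∫ τ in Set.Iic s, RCLike.re (f τ) ∂μ : ℝ) : ℂ) +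
        (∫ τ in Set.Iic s, RCLike.im (f τ) ∂μ : ℝ) * RCLike.I := by
    funext s
    exact (setIntegral_re_add_im hf.integrableOn).symm
  rw [heq]
  exact (Complex.measurable_ofReal.comp (key _ hf.re)).add
    ((Complex.measurable_ofReal.comp (key _ hf.im)).mul_const _)

/-- Let `a = f dμ` be a finite complex measure on `ℝ` with total mass
`0` and finite first moment `∫ |τ| d‖a‖(τ) = ∫ |τ|·‖f τ‖ dμ < ∞`. Then the
cumulative distribution function `F(s) = a((−∞, s])` is integrable on `ℝ` and
`∫ |F| ≤ ∫ |τ| d‖a‖(τ)`. -/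
theorem stmt_7 (μ : Measure ℝ) (f : ℝ → ℂ) (hf : Integrable f μ)
    (hmass : ∫ τ, f τ ∂μ = 0)
    (hmom : Integrable (fun τ => |τ| * ‖f τ‖) μ) :
    Integrable (fun s => ∫ τ in Set.Iic s, f τ ∂μ) ∧
    (∫ s : ℝ, ‖∫ τ in Set.Iic s, f τ ∂μ‖) ≤ ∫ τ, |τ| * ‖f τ‖ ∂μ := by
  set F : ℝ → ℂ := fun s => ∫ τ in Set.Iic s, f τ ∂μ with hF
  have hFm : Measurable F := meas_cdf μ f hf
  set ν : Measure ℝ := μ.withDensity (fun τ => (‖f τ‖₊ : ℝ≥0∞)) with hνdef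
  haveI : IsFiniteMeasure ν := isFiniteMeasure_withDensity hf.2.ne
  have hν : ∀ s : Set ℝ, MeasurableSet s → ν s = ∫⁻ τ in s, (‖f τ‖₊ : ℝ≥0∞) ∂μ :=
    fun s hs => withDensity_apply _ hs
  -- pointwise bounds
  have bound1 : ∀ s, (‖F s‖₊ : ℝ≥0∞) ≤ ν (Set.Iic s) := by
    intro s
    rw [hν _ measurableSet_Iic]
    exact MeasureTheory.enorm_integral_le_lintegral_enorm _
  have bound2 : ∀ s, (‖F s‖₊ : ℝ≥0∞) ≤ ν (Set.Ioi s) := by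
    intro s
    have h0 : F s = -∫ τ in Set.Ioi s, f τ ∂μ := by
      have h := integral_add_compl (measurableSet_Iic (a := s)) hf
      rw [compl_Iic, hmass] at h
      exact eq_neg_of_add_eq_zero_left h
    rw [hν _ measurableSet_Ioi, h0]
    rw [nnnorm_neg]
    exact MeasureTheory.enorm_integral_le_lintegral_enorm _
  -- Fubini computations
  have swapA : ∫⁻ s in Set.Iio (0:ℝ), ν (Set.Iic s) =
      ∫⁻ τ, ENNReal.ofReal (0 - τ) ∂ν := by
    set k : ℝ → ℝ → ℝ≥0∞ :=
      fun s τ => ({p : ℝ × ℝ | p.2 ≤ p.1}).indicator 1 (s, τ) with hk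
    have hkm : AEMeasurable (Function.uncurry k)
        ((volume.restrict (Set.Iio (0:ℝ))).prod ν) :=
      (measurable_const.indicator (measurableSet_le measurable_snd measurable_fst)).aemeasurable
    calc ∫⁻ s in Set.Iio (0:ℝ), ν (Set.Iic s)
        = ∫⁻ s in Set.Iio (0:ℝ), ∫⁻ τ, k s τ ∂ν := by
          refine lintegral_congr fun s => ?_
          rw [show (fun τ => k s τ) = (Set.Iic s).indicator 1 by
            funext τ; by_cases h : τ ≤ s <;> simp [hk, Set.indicator, h]]
          exact (lintegral_indicator_one measurableSet_Iic).symm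
      _ = ∫⁻ τ, (∫⁻ s in Set.Iio (0:ℝ), k s τ) ∂ν := lintegral_lintegral_swap hkm
      _ = ∫⁻ τ, ENNReal.ofReal (0 - τ) ∂ν := by
          refine lintegral_congr fun τ => ?_
          rw [show (fun s => k s τ) = (Set.Ici τ).indicator 1 by
            funext s; by_cases h : τ ≤ s <;> simp [hk, Set.indicator, h]]
          rw [lintegral_indicator_one measurableSet_Ici,
            Measure.restrict_apply measurableSet_Ici, Set.Ici_inter_Iio,
            Real.volume_Ico]
  have swapB : ∫⁻ s in Set.Ici (0:ℝ), ν (Set.Ioi s) =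
      ∫⁻ τ, ENNReal.ofReal (τ - 0) ∂ν := by
    set k : ℝ → ℝ → ℝ≥0∞ :=
      fun s τ => ({p : ℝ × ℝ | p.1 < p.2}).indicator 1 (s, τ) with hk
    have hkm : AEMeasurable (Function.uncurry k)
        ((volume.restrict (Set.Ici (0:ℝ))).prod ν) :=
      (measurable_const.indicator (measurableSet_lt measurable_fst measurable_snd)).aemeasurable
    calc ∫⁻ s in Set.Ici (0:ℝ), ν (Set.Ioi s)
        = ∫⁻ s in Set.Ici (0:ℝ), ∫⁻ τ, k s τ ∂ν := by
          refine lintegral_congr fun s => ?_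
          rw [show (fun τ => k s τ) = (Set.Ioi s).indicator 1 by
            funext τ; by_cases h : s < τ <;> simp [hk, Set.indicator, h]]
          exact (lintegral_indicator_one measurableSet_Ioi).symm
      _ = ∫⁻ τ, (∫⁻ s in Set.Ici (0:ℝ), k s τ) ∂ν := lintegral_lintegral_swap hkm
      _ = ∫⁻ τ, ENNReal.ofReal (τ - 0) ∂ν := by
          refine lintegral_congr fun τ => ?_
          rw [show (fun s => k s τ) = (Set.Iio τ).indicator 1 by
            funext s; by_cases h : s < τ <;> simp [hk, Set.indicator, h]]
          rw [lintegral_indicator_one measurableSet_Iio,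
            Measure.restrict_apply measurableSet_Iio, Set.inter_comm,
            Set.Ici_inter_Iio, Real.volume_Ico]
  -- total bound
  have htot : ∫⁻ s, (‖F s‖₊ : ℝ≥0∞) ∂volume ≤ ENNReal.ofReal (∫ τ, |τ| * ‖f τ‖ ∂μ) := by
    calc ∫⁻ s, (‖F s‖₊ : ℝ≥0∞) ∂volume
        = (∫⁻ s in Set.Iio (0:ℝ), (‖F s‖₊ : ℝ≥0∞)) +
            ∫⁻ s in Set.Ici (0:ℝ), (‖F s‖₊ : ℝ≥0∞) := by
          rw [← lintegral_add_compl (fun s => (‖F s‖₊ : ℝ≥0∞)) measurableSet_Iio,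
            compl_Iio]
      _ ≤ (∫⁻ s in Set.Iio (0:ℝ), ν (Set.Iic s)) +
            ∫⁻ s in Set.Ici (0:ℝ), ν (Set.Ioi s) :=
          add_le_add (lintegral_mono fun s => bound1 s) (lintegral_mono fun s => bound2 s)
      _ = (∫⁻ τ, ENNReal.ofReal (0 - τ) ∂ν) + ∫⁻ τ, ENNReal.ofReal (τ - 0) ∂ν := by
          rw [swapA, swapB]
      _ = ∫⁻ τ, (ENNReal.ofReal (0 - τ) + ENNReal.ofReal (τ - 0)) ∂ν :=
          (lintegral_add_left ((measurable_const.sub measurable_id).ennreal_ofReal) _).symm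
      _ = ∫⁻ τ, ENNReal.ofReal |τ| ∂ν := by
          refine lintegral_congr fun τ => ?_
          rcases le_total 0 τ with h | h
          · rw [abs_of_nonneg h, ENNReal.ofReal_of_nonpos (show 0 - τ ≤ 0 by linarith),
              zero_add, sub_zero]
          · rw [abs_of_nonpos h, ENNReal.ofReal_of_nonpos (show τ - 0 ≤ 0 by linarith),
              add_zero, zero_sub]
      _ = ∫⁻ τ, ((‖f τ‖₊ : ℝ≥0∞) * ENNReal.ofReal |τ|) ∂μ :=
          lintegral_withDensity_eq_lintegral_mul₀ hf.1.enorm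
            (measurable_abs.ennreal_ofReal).aemeasurable
      _ = ∫⁻ τ, ENNReal.ofReal (|τ| * ‖f τ‖) ∂μ := by
          refine lintegral_congr fun τ => ?_
          rw [← enorm_eq_nnnorm, ← ofReal_norm_eq_enorm, ← ENNReal.ofReal_mul (norm_nonneg _), mul_comm]
      _ = ENNReal.ofReal (∫ τ, |τ| * ‖f τ‖ ∂μ) :=
          (ofReal_integral_eq_lintegral_ofReal hmom
            (Eventually.of_forall fun τ => mul_nonneg (abs_nonneg _) (norm_nonneg _))).symm
  have hint : Integrable F := ⟨hFm.aestronglyMeasurable, htot.trans_lt ENNReal.ofReal_lt_top⟩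
  refine ⟨hint, ?_⟩
  have heqn : (∫ s : ℝ, ‖F s‖) = (∫⁻ s, (‖F s‖₊ : ℝ≥0∞) ∂volume).toReal :=
    integral_norm_eq_lintegral_enorm hFm.aestronglyMeasurable
  rw [show (∫ s : ℝ, ‖∫ τ in Set.Iic s, f τ ∂μ‖) = ∫ s : ℝ, ‖F s‖ from rfl, heqn]
  exact ENNReal.toReal_le_of_le_ofReal
    (integral_nonneg fun τ => mul_nonneg (abs_nonneg _) (norm_nonneg _)) htot
end

section
/- Let a be a finite complex measure on ℝ with total mass a(ℝ) = 0 and with finite first moment ∫ |τ| d‖a‖(τ) < ∞, where ‖a‖ is the total variation measure. Let â(λ) = ∫ e^{−iλτ} da(τ) be its Fourier transform. Then there exists an integrable function g ∈ L¹(ℝ, ℂ) whose Fourier transform ĝ(λ) = ∫ e^{−iλτ} g(τ) dτ satisfies ĝ(λ) = â(λ)² / λ for every λ ≠ 0. -/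
open MeasureTheory Filter Topology Set

/-- Fourier transform `μ̂(λ) = ∫ e^{−iλτ} f(τ) dμ(τ)` of the finite complex measure
represented by the integrable density `f` with respect to `μ`. -/
noncomputable def mFT (μ : MeasureTheory.Measure ℝ) (f : ℝ → ℂ) (l : ℝ) : ℂ :=
  ∫ τ, Complex.exp (-(Complex.I * (l : ℂ) * (τ : ℂ))) * f τ ∂μ

noncomputable def eK (l τ : ℝ) : ℂ := Complex.exp (-(Complex.I * (l : ℂ) * (τ : ℂ)))

noncomputable def kk (t s : ℝ) : ℂ :=
  (Set.Ioc (0:ℝ) t).indicator (fun _ => (1:ℂ)) s - (Set.Ioc t (0:ℝ)).indicator (fun _ => (1:ℂ)) s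

lemma eK_norm (l τ : ℝ) : ‖eK l τ‖ = 1 := by
  simp [eK, Complex.norm_exp]

lemma eK_cont (l : ℝ) : Continuous (eK l) := by
  unfold eK; fun_prop

lemma eK_eq (l τ : ℝ) : eK l τ = Complex.exp ((-(Complex.I * l)) * τ) := by
  unfold eK; congr 1; ring

lemma kk_meas2 : Measurable fun q : ℝ × ℝ => kk q.1 q.2 := by
  have h1 : MeasurableSet {q : ℝ × ℝ | 0 < q.2 ∧ q.2 ≤ q.1} :=
    (measurableSet_lt measurable_const measurable_snd).inter
      (measurableSet_le measurable_snd measurable_fst)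
  have h2 : MeasurableSet {q : ℝ × ℝ | q.1 < q.2 ∧ q.2 ≤ 0} :=
    (measurableSet_lt measurable_fst measurable_snd).inter
      (measurableSet_le measurable_snd measurable_const)
  have : (fun q : ℝ × ℝ => kk q.1 q.2) =
      fun q => ({q : ℝ × ℝ | 0 < q.2 ∧ q.2 ≤ q.1}.indicator (fun _ => (1:ℂ)) q)
        - ({q : ℝ × ℝ | q.1 < q.2 ∧ q.2 ≤ 0}.indicator (fun _ => (1:ℂ)) q) := by
    ext q
    simp [kk, Set.indicator_apply, Set.mem_Ioc]
  rw [this]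
  exact ((measurable_const.indicator h1).sub (measurable_const.indicator h2))

lemma kk_norm_le (t s : ℝ) : ‖kk t s‖ ≤ (Set.uIoc (0:ℝ) t).indicator (fun _ => (1:ℝ)) s := by
  have hu : Set.uIoc (0:ℝ) t = Set.Ioc 0 t ∪ Set.Ioc t 0 := Set.uIoc_eq_union
  by_cases h1 : s ∈ Set.Ioc (0:ℝ) t
  · have hs : s ∈ Set.uIoc (0:ℝ) t := by rw [hu]; exact Or.inl h1
    have h2 : s ∉ Set.Ioc t (0:ℝ) := fun h2 => by
      have := h1.1; have := h2.2; linarith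
    simp [kk, Set.indicator_of_mem, Set.indicator_of_notMem, h1, h2, hs]
  · by_cases h2 : s ∈ Set.Ioc t (0:ℝ)
    · have hs : s ∈ Set.uIoc (0:ℝ) t := by rw [hu]; exact Or.inr h2
      simp [kk, Set.indicator_of_mem, Set.indicator_of_notMem, h1, h2, hs]
    · have hs : s ∉ Set.uIoc (0:ℝ) t := by
        rw [hu]; intro h; rcases h with h | h
        exacts [h1 h, h2 h]
      simp [kk, Set.indicator_of_notMem, h1, h2, hs]

lemma kk_integrable (t : ℝ) : Integrable (kk t) volume := by
  have h1 : Integrable ((Set.Ioc (0:ℝ) t).indicator (fun _ => (1:ℂ))) volume :=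
    (integrable_indicator_iff measurableSet_Ioc).2 <|
      (integrableOn_const measure_Ioc_lt_top.ne)
  have h2 : Integrable ((Set.Ioc t (0:ℝ)).indicator (fun _ => (1:ℂ))) volume :=
    (integrable_indicator_iff measurableSet_Ioc).2 <|
      (integrableOn_const measure_Ioc_lt_top.ne)
  exact h1.sub h2

lemma indicator_uIoc_integral (t : ℝ) :
    ∫ s, (Set.uIoc (0:ℝ) t).indicator (fun _ => (1:ℝ)) s = |t| := by
  rw [MeasureTheory.integral_indicator_const (1:ℝ) measurableSet_uIoc]
  rcases le_total 0 t with h | h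
  · rw [Set.uIoc_of_le h]
    simp [Real.volume_Ioc, abs_of_nonneg h, h]
  · rw [Set.uIoc_of_ge h]
    simp [Real.volume_Ioc, abs_of_nonpos h, h]

lemma key_s_integral {l : ℝ} (hl : l ≠ 0) (t : ℝ) :
    ∫ s, eK l s * kk t s =
      (Complex.exp ((-(Complex.I * l)) * t) - 1) / (-(Complex.I * l)) := by
  have hc : (-(Complex.I * l)) ≠ 0 := by
    simp [Complex.I_ne_zero, Complex.ofReal_eq_zero, hl]
  have hind : ∀ u : Set ℝ, MeasurableSet u → volume u < ⊤ →
      Integrable (u.indicator (eK l)) volume := by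
    intro u hu hufin
    rw [integrable_indicator_iff hu]
    have h1 : Integrable (fun x => eK l x * (fun _ : ℝ => (1:ℂ)) x) (volume.restrict u) :=
      Integrable.bdd_mul (integrableOn_const hufin.ne)
        (eK_cont l).aestronglyMeasurable (Eventually.of_forall fun x => (eK_norm l x).le)
    exact h1.congr (Eventually.of_forall fun x => by simp)
  have h1 := hind _ measurableSet_Ioc (measure_Ioc_lt_top (a := (0:ℝ)) (b := t))
  have h2 := hind _ measurableSet_Ioc (measure_Ioc_lt_top (a := t) (b := (0:ℝ)))
  have heq : (fun s => eK l s * kk t s) =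
      fun s => (Set.Ioc (0:ℝ) t).indicator (eK l) s - (Set.Ioc t (0:ℝ)).indicator (eK l) s := by
    ext s
    simp only [kk, Set.indicator_apply]
    split_ifs <;> ring
  rw [heq, integral_sub h1 h2, integral_indicator measurableSet_Ioc,
    integral_indicator measurableSet_Ioc]
  have : (∫ s in Set.Ioc (0:ℝ) t, eK l s) - ∫ s in Set.Ioc t (0:ℝ), eK l s
      = ∫ s in (0:ℝ)..t, eK l s := rfl
  rw [this]
  have : ∀ s : ℝ, eK l s = Complex.exp ((-(Complex.I * l)) * s) := fun s => eK_eq l s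
  calc ∫ s in (0:ℝ)..t, eK l s = ∫ s in (0:ℝ)..t, Complex.exp ((-(Complex.I * l)) * s) := by
        simp_rw [this]
    _ = (Complex.exp ((-(Complex.I * l)) * t) - 1) / (-(Complex.I * l)) := by
        rw [integral_exp_mul_complex hc]; simp

lemma aux (μ : Measure ℝ) [SigmaFinite μ] {f : ℝ → ℂ} (hfm : Measurable f)
    (hf : Integrable f μ) (hmass : (∫ τ, f τ ∂μ) = 0)
    (hmom : Integrable (fun τ => |τ| * ‖f τ‖) μ) :
    ∃ g : ℝ → ℂ, Integrable g ∧ ∀ l : ℝ, l ≠ 0 →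
      (∫ τ : ℝ, eK l τ * g τ) = (mFT μ f l) ^ 2 / (l : ℂ) := by
  set ν2 : Measure (ℝ × ℝ) := μ.prod μ with hν2
  have hKmeas : Measurable fun z : (ℝ × ℝ) × ℝ => f z.1.1 * f z.1.2 * kk (z.1.1 + z.1.2) z.2 := by
    refine Measurable.mul ?_ ?_
    · exact ((hfm.comp (measurable_fst.comp measurable_fst)).mul
        (hfm.comp (measurable_snd.comp measurable_fst)))
    · exact kk_meas2.comp
        (((measurable_fst.comp measurable_fst).add (measurable_snd.comp measurable_fst)).prodMk
          measurable_snd)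
  have hHmeas : ∀ l : ℝ, Measurable fun z : (ℝ × ℝ) × ℝ =>
      eK l z.2 * (f z.1.1 * f z.1.2 * kk (z.1.1 + z.1.2) z.2) :=
    fun l => ((eK_cont l).measurable.comp measurable_snd).mul hKmeas
  have hHint : ∀ l : ℝ, Integrable (fun z : (ℝ × ℝ) × ℝ =>
      eK l z.2 * (f z.1.1 * f z.1.2 * kk (z.1.1 + z.1.2) z.2)) (ν2.prod volume) := by
    intro l
    refine (integrable_prod_iff (hHmeas l).aestronglyMeasurable).2 ⟨?_, ?_⟩
    · refine Eventually.of_forall fun p => ?_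
      have h1 : Integrable (fun s => (eK l s * (f p.1 * f p.2)) * kk (p.1 + p.2) s)
          volume :=
        Integrable.bdd_mul (kk_integrable _)
          (((eK_cont l).measurable.mul_const _).aestronglyMeasurable)
          (Eventually.of_forall fun s => by rw [norm_mul, eK_norm, one_mul])
      exact h1.congr (Eventually.of_forall fun s => by ring)
    · have hbound_int : Integrable
          (fun p : ℝ × ℝ => ‖f p.1‖ * ‖f p.2‖ * (|p.1| + |p.2|)) ν2 := by
        have h1 : Integrable (fun p : ℝ × ℝ => (|p.1| * ‖f p.1‖) * ‖f p.2‖) ν2 :=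
          hmom.mul_prod hf.norm
        have h2 : Integrable (fun p : ℝ × ℝ => ‖f p.1‖ * (|p.2| * ‖f p.2‖)) ν2 :=
          hf.norm.mul_prod hmom
        exact (h1.add h2).congr (Eventually.of_forall fun p => by simp only [Pi.add_apply]; ring)
      refine Integrable.mono' hbound_int
        (((hHmeas l).norm.aestronglyMeasurable).integral_prod_right') ?_
      refine Eventually.of_forall fun p => ?_
      rw [Real.norm_eq_abs, abs_of_nonneg (integral_nonneg fun s => norm_nonneg _)]
      have huIoc_fin : volume (Set.uIoc (0:ℝ) (p.1 + p.2)) < ⊤ := by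
        rw [Set.uIoc]; exact measure_Ioc_lt_top
      have hbnd_int : Integrable (fun s : ℝ =>
          (‖f p.1‖ * ‖f p.2‖) * (Set.uIoc (0:ℝ) (p.1 + p.2)).indicator (fun _ => (1:ℝ)) s)
          volume :=
        ((integrable_indicator_iff measurableSet_uIoc).2
          (integrableOn_const huIoc_fin.ne)).const_mul _
      have hple : ∀ s : ℝ, ‖eK l s * (f p.1 * f p.2 * kk (p.1 + p.2) s)‖ ≤
          (‖f p.1‖ * ‖f p.2‖) * (Set.uIoc (0:ℝ) (p.1 + p.2)).indicator (fun _ => (1:ℝ)) s := by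
        intro s
        rw [norm_mul, eK_norm, one_mul, norm_mul, norm_mul]
        exact mul_le_mul_of_nonneg_left (kk_norm_le _ s) (by positivity)
      calc (∫ s, ‖eK l s * (f p.1 * f p.2 * kk (p.1 + p.2) s)‖)
          ≤ ∫ s, (‖f p.1‖ * ‖f p.2‖) *
              (Set.uIoc (0:ℝ) (p.1 + p.2)).indicator (fun _ => (1:ℝ)) s :=
            integral_mono_of_nonneg (Eventually.of_forall fun s => norm_nonneg _)
              hbnd_int (Eventually.of_forall hple)
        _ = (‖f p.1‖ * ‖f p.2‖) * |p.1 + p.2| := by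
            rw [integral_const_mul, indicator_uIoc_integral]
        _ ≤ ‖f p.1‖ * ‖f p.2‖ * (|p.1| + |p.2|) :=
            mul_le_mul_of_nonneg_left (abs_add_le _ _) (by positivity)
  have hEf : ∀ l : ℝ, Integrable (fun τ => eK l τ * f τ) μ := fun l =>
    Integrable.bdd_mul hf (eK_cont l).measurable.aestronglyMeasurable
      (Eventually.of_forall fun x => (eK_norm l x).le)
  have hff : Integrable (fun p : ℝ × ℝ => f p.1 * f p.2) ν2 := hf.mul_prod hf
  refine ⟨fun s => (-Complex.I) * ∫ p, f p.1 * f p.2 * kk (p.1 + p.2) s ∂ν2, ?_, ?_⟩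
  · have h0 : Integrable (fun z : (ℝ × ℝ) × ℝ => f z.1.1 * f z.1.2 * kk (z.1.1 + z.1.2) z.2)
        (ν2.prod volume) :=
      (hHint 0).congr (Eventually.of_forall fun z => by simp [eK])
    exact h0.integral_prod_right.const_mul _
  · intro l hl
    have hlC : (l : ℂ) ≠ 0 := Complex.ofReal_ne_zero.2 hl
    have hM : mFT μ f l = ∫ τ, eK l τ * f τ ∂μ := rfl
    have step1 : (∫ τ : ℝ, eK l τ *
          ((-Complex.I) * ∫ p, f p.1 * f p.2 * kk (p.1 + p.2) τ ∂ν2))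
        = (-Complex.I) *
          ∫ s, (∫ p, eK l s * (f p.1 * f p.2 * kk (p.1 + p.2) s) ∂ν2) := by
      have h : ∀ s : ℝ, eK l s * ((-Complex.I) * ∫ p, f p.1 * f p.2 * kk (p.1 + p.2) s ∂ν2)
          = (-Complex.I) * ∫ p, eK l s * (f p.1 * f p.2 * kk (p.1 + p.2) s) ∂ν2 := by
        intro s
        rw [integral_const_mul]
        ring
      simp_rw [h]
      rw [integral_const_mul]
    have hswap : (∫ s, (∫ p, eK l s * (f p.1 * f p.2 * kk (p.1 + p.2) s) ∂ν2))
        = ∫ p, (∫ s, eK l s * (f p.1 * f p.2 * kk (p.1 + p.2) s)) ∂ν2 := by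
      have hint' : Integrable
          (Function.uncurry fun (p : ℝ × ℝ) (s : ℝ) =>
            eK l s * (f p.1 * f p.2 * kk (p.1 + p.2) s)) (ν2.prod volume) :=
        (hHint l).congr (Eventually.of_forall fun z => by
          simp only [Function.uncurry])
      exact (MeasureTheory.integral_integral_swap hint').symm
    have hinner : ∀ p : ℝ × ℝ, (∫ s, eK l s * (f p.1 * f p.2 * kk (p.1 + p.2) s))
        = f p.1 * f p.2 *
          ((Complex.exp ((-(Complex.I * l)) * ((p.1 : ℝ) + p.2)) - 1) / (-(Complex.I * l))) := by
      intro p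
      have h : ∀ s : ℝ, eK l s * (f p.1 * f p.2 * kk (p.1 + p.2) s)
          = (f p.1 * f p.2) * (eK l s * kk (p.1 + p.2) s) := fun s => by ring
      simp_rw [h]
      rw [integral_const_mul, key_s_integral hl]
      push_cast
      ring
    have hprod : Integrable (fun p : ℝ × ℝ => (eK l p.1 * f p.1) * (eK l p.2 * f p.2)) ν2 :=
      (hEf l).mul_prod (hEf l)
    have hpt : ∀ p : ℝ × ℝ, f p.1 * f p.2 *
          ((Complex.exp ((-(Complex.I * l)) * ((p.1 : ℝ) + p.2)) - 1) / (-(Complex.I * l)))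
        = (-(Complex.I * l))⁻¹ *
          ((eK l p.1 * f p.1) * (eK l p.2 * f p.2) - f p.1 * f p.2) := by
      intro p
      have h1 : Complex.exp ((-(Complex.I * l)) * ((p.1 : ℝ) + p.2))
          = Complex.exp ((-(Complex.I * l)) * p.1) * Complex.exp ((-(Complex.I * l)) * p.2) := by
        rw [← Complex.exp_add]
        congr 1
        ring
      rw [eK_eq, eK_eq, h1]
      field_simp
    have hsplit : (∫ p, (∫ s, eK l s * (f p.1 * f p.2 * kk (p.1 + p.2) s)) ∂ν2)
        = (-(Complex.I * l))⁻¹ *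
          ((∫ p, (eK l p.1 * f p.1) * (eK l p.2 * f p.2) ∂ν2) - ∫ p, f p.1 * f p.2 ∂ν2) := by
      simp_rw [hinner, hpt]
      rw [integral_const_mul, integral_sub hprod hff]
    have hM2 : (∫ p, (eK l p.1 * f p.1) * (eK l p.2 * f p.2) ∂ν2) = (mFT μ f l) ^ 2 := by
      rw [hν2, MeasureTheory.integral_prod_mul (f := fun τ => eK l τ * f τ)
        (g := fun τ => eK l τ * f τ), hM, sq]
    have h00 : (∫ p, f p.1 * f p.2 ∂ν2) = 0 := by
      rw [hν2, MeasureTheory.integral_prod_mul (f := f) (g := f), hmass, zero_mul]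
    show (∫ τ : ℝ, eK l τ * ((-Complex.I) * ∫ p, f p.1 * f p.2 * kk (p.1 + p.2) τ ∂ν2))
        = (mFT μ f l) ^ 2 / (l : ℂ)
    rw [step1, hswap, hsplit, hM2, h00, sub_zero]
    have hI : Complex.I ≠ 0 := Complex.I_ne_zero
    field_simp

/-- Let `a = f dμ` be a finite complex measure on `ℝ` with total mass
`0` and finite first moment, and let `â` be its Fourier transform. Then there is an
integrable `g ∈ L¹(ℝ, ℂ)` whose Fourier transform equals `â(λ)²/λ` for all `λ ≠ 0`. -/
theorem stmt_8 (μ : Measure ℝ) (f : ℝ → ℂ) (hf : Integrable f μ)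
    (hmass : ∫ τ, f τ ∂μ = 0)
    (hmom : Integrable (fun τ => |τ| * ‖f τ‖) μ) :
    ∃ g : ℝ → ℂ, Integrable g ∧
      ∀ l : ℝ, l ≠ 0 →
        (∫ τ : ℝ, Complex.exp (-(Complex.I * (l : ℂ) * (τ : ℂ))) * g τ)
          = (mFT μ f l) ^ 2 / (l : ℂ) := by
  have hmf := hf.aestronglyMeasurable
  set f₀ : ℝ → ℂ := hmf.mk f with hf₀def
  have hf₀meas : Measurable f₀ := hmf.stronglyMeasurable_mk.measurable
  have hae : f =ᵐ[μ] f₀ := hmf.ae_eq_mk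
  have hf₀ : Integrable f₀ μ := hf.congr hae
  have hafs := hf₀.aefinStronglyMeasurable
  set S := hafs.sigmaFiniteSet with hSdef
  have hSm : MeasurableSet S := hafs.measurableSet
  have hzero : f₀ =ᵐ[μ.restrict Sᶜ] 0 := hafs.ae_eq_zero_compl
  set ν : Measure ℝ := μ.restrict S with hν
  haveI : SigmaFinite ν := hafs.sigmaFinite_restrict
  have key : ∀ G : ℝ → ℂ, Integrable G μ → G =ᵐ[μ.restrict Sᶜ] 0 →
      (∫ x, G x ∂μ) = ∫ x, G x ∂ν := by
    intro G hGi hG0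
    have h := integral_add_compl hSm hGi
    rw [integral_eq_zero_of_ae hG0, add_zero] at h
    exact h.symm
  have hfν : Integrable f₀ ν := hf₀.restrict
  have hmassν : (∫ τ, f₀ τ ∂ν) = 0 := by
    rw [← key f₀ hf₀ hzero, ← integral_congr_ae hae, hmass]
  have hmomμ : Integrable (fun τ => |τ| * ‖f₀ τ‖) μ :=
    hmom.congr (hae.mono fun τ h => by simp only [h])
  have hmomν : Integrable (fun τ => |τ| * ‖f₀ τ‖) ν := hmomμ.restrict
  have hmFT : ∀ l : ℝ, mFT μ f l = mFT ν f₀ l := by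
    intro l
    have h1 : mFT μ f l = ∫ τ, eK l τ * f₀ τ ∂μ :=
      integral_congr_ae (hae.mono fun τ h => by simp only [eK, h])
    have h2 : Integrable (fun τ => eK l τ * f₀ τ) μ :=
      Integrable.bdd_mul hf₀ (eK_cont l).measurable.aestronglyMeasurable
        (Eventually.of_forall fun x => (eK_norm l x).le)
    have h3 : (fun τ => eK l τ * f₀ τ) =ᵐ[μ.restrict Sᶜ] 0 :=
      hzero.mono fun τ h => by simp [h]
    rw [h1, key _ h2 h3]
    rfl
  obtain ⟨g, hg, hgl⟩ := aux ν hf₀meas hfν hmassν hmomν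
  refine ⟨g, hg, fun l hl => ?_⟩
  rw [hmFT l]
  exact hgl l hl
end

section
/- Let φ : ℝ → ℂ be a bounded uniformly continuous function and ⋆ ∈ {+, −}. Suppose sing supp^⋆(φ̂) = ∅, i.e. for every λ ∈ ℝ there exists an open interval I containing λ such that for every finite complex measure μ on ℝ whose Fourier transform μ̂ is supported in I, the convolution μ * φ tends to 0 at ⋆∞. Then φ(t) → 0 as t → ⋆∞. -/
open MeasureTheory Filter Topology Set

/-- Convolution `(μ * φ)(t) = ∫ φ(t − τ) f(τ) dμ(τ)` of the finite complex measure
`f dμ` with a function `φ`. -/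
noncomputable def mconv (μ : MeasureTheory.Measure ℝ) (f : ℝ → ℂ) (φ : ℝ → ℂ)
    (t : ℝ) : ℂ :=
  ∫ τ, φ (t - τ) * f τ ∂μ

/-- `x ∉ sing supp^⋆(φ̂)` (where `⋆∞` is encoded by the filter `l`, `atTop` or
`atBot`): there is an open interval `I ∋ x` such that for every finite complex
measure `g dν` with Fourier transform supported in `I`, the convolution with `φ`
tends to `0` along `l`. -/
def NotSingAt (l : Filter ℝ) (φ : ℝ → ℂ) (x : ℝ) : Prop :=
  ∃ c d : ℝ, x ∈ Set.Ioo c d ∧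
    ∀ (ν : MeasureTheory.Measure ℝ) (g : ℝ → ℂ), MeasureTheory.Integrable g ν →
      tsupport (mFT ν g) ⊆ Set.Ioo c d →
      Filter.Tendsto (mconv ν g φ) l (nhds 0)

open FourierTransform Real Complex

section Aux

lemma mFT_volume_eq (g : ℝ → ℂ) (l : ℝ) : mFT volume g l = 𝓕 g (l / (2 * π)) := by
  rw [mFT, Real.fourier_real_eq_integral_exp_smul]
  congr 1
  ext v
  rw [smul_eq_mul]
  congr 1
  have : (-2 * π * v * (l / (2 * π)) : ℝ) = -(v * l) := by
    field_simp
  rw [this]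
  push_cast
  ring_nf

lemma integrable_fourier_smooth_cpt (F : ℝ → ℂ) (hF : ContDiff ℝ (⊤:ℕ∞) F)
    (hsupp : HasCompactSupport F) : Integrable (𝓕 F) := by
  have hFc : Continuous F := hF.continuous
  have hs : ∀ n : ℕ, HasCompactSupport (iteratedDeriv n F) := by
    intro n
    induction n with
    | zero => simpa using hsupp
    | succ k ih => rw [iteratedDeriv_succ]; exact ih.deriv
  have hint : ∀ n : ℕ, Integrable (iteratedDeriv n F) := fun n =>
    (hF.continuous_iteratedDeriv n (by exact_mod_cast le_top)).integrable_of_hasCompactSupport (hs n)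
  have key : 𝓕 (iteratedDeriv 2 F) = fun (x : ℝ) ↦ (2 * π * I * x) ^ 2 • (𝓕 F x) :=
    Real.fourier_iteratedDeriv (N := (⊤ : ℕ∞)) hF
      (fun n _ => hint n) (by exact_mod_cast le_top)
  set A := ∫ x, ‖F x‖ with hA
  set B := ∫ x, ‖iteratedDeriv 2 F x‖ with hB
  have hbound : ∀ x : ℝ, ‖𝓕 F x‖ * (1 + x ^ 2) ≤ A + B := by
    intro x
    have h1 : ‖𝓕 F x‖ ≤ A := VectorFourier.norm_fourierIntegral_le_integral_norm _ _ _ _ _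
    have h2 : ‖𝓕 (iteratedDeriv 2 F) x‖ ≤ B := VectorFourier.norm_fourierIntegral_le_integral_norm _ _ _ _ _
    have h3 : ‖𝓕 (iteratedDeriv 2 F) x‖ = (2*π)^2 * x^2 * ‖𝓕 F x‖ := by
      rw [key]
      simp only [norm_smul, norm_pow]
      have : ‖2 * (π:ℂ) * I * (x:ℂ)‖ = 2 * π * |x| := by
        simp [norm_mul, Complex.norm_real, Real.norm_eq_abs, _root_.abs_of_nonneg pi_nonneg]
      rw [this]
      rw [mul_pow, mul_pow, _root_.sq_abs]
    rw [h3] at h2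
    have hπ : (1:ℝ) ≤ (2*π)^2 := by nlinarith [pi_gt_three]
    nlinarith [mul_nonneg (sq_nonneg x) (norm_nonneg (𝓕 F x))]
  have hcont : Continuous (𝓕 F) :=
    VectorFourier.fourierIntegral_continuous Real.continuous_fourierChar
      (by exact continuous_inner) (hFc.integrable_of_hasCompactSupport hsupp)
  have hm : Integrable (fun x : ℝ => (A + B) * (1 + x ^ 2)⁻¹) :=
    integrable_inv_one_add_sq.const_mul _
  apply hm.mono' hcont.aestronglyMeasurable
  filter_upwards with x
  have h1x : (0:ℝ) < 1 + x ^ 2 := by positivity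
  calc ‖𝓕 F x‖ = ‖𝓕 F x‖ * (1 + x^2) * (1 + x^2)⁻¹ := by field_simp
  _ ≤ (A + B) * (1 + x^2)⁻¹ :=
      mul_le_mul_of_nonneg_right (hbound x) (by positivity)

noncomputable def gfun (χ : ℝ → ℂ) : ℝ → ℂ := 𝓕⁻ (fun ξ => χ (2 * π * ξ))

lemma gfun_props (χ : ℝ → ℂ) (hχ : ContDiff ℝ (⊤:ℕ∞) χ) (hsupp : HasCompactSupport χ) :
    Integrable (gfun χ) ∧ Continuous (gfun χ) ∧ mFT volume (gfun χ) = χ := by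
  set F : ℝ → ℂ := fun ξ => χ (2 * π * ξ) with hFdef
  have hFsm : ContDiff ℝ (⊤:ℕ∞) F := hχ.comp (contDiff_const.mul contDiff_id)
  have hFsupp : HasCompactSupport F :=
    hsupp.comp_isClosedEmbedding (Homeomorph.mulLeft₀ (2*π) (by positivity)).isClosedEmbedding
  have hFi : Integrable F := hFsm.continuous.integrable_of_hasCompactSupport hFsupp
  have hFTi : Integrable (𝓕 F) := integrable_fourier_smooth_cpt F hFsm hFsupp
  have hFTc : Continuous (𝓕 F) :=
    VectorFourier.fourierIntegral_continuous Real.continuous_fourierChar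
      (by exact continuous_inner) hFi
  have hinv : 𝓕 (𝓕⁻ F) = F := hFsm.continuous.fourier_fourierInv_eq hFi hFTi
  have hneg : gfun χ = fun w => 𝓕 F (-w) := by
    funext w; exact Real.fourierInv_eq_fourier_neg F w
  refine ⟨?_, ?_, ?_⟩
  · rw [hneg]; exact hFTi.comp_neg
  · rw [hneg]; exact hFTc.comp continuous_neg
  · funext lam
    rw [mFT_volume_eq, gfun]
    rw [show (𝓕 (𝓕⁻ F : ℝ → ℂ) : ℝ → ℂ) (lam / (2*π)) = F (lam / (2*π)) from congrFun hinv _]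
    show χ (2 * π * (lam / (2 * π))) = χ lam
    congr 1
    field_simp

lemma gfun_sum (s : Finset ℕ) (P : ℕ → ℝ → ℂ)
    (hP : ∀ j, Integrable (fun ξ : ℝ => P j (2 * π * ξ))) :
    gfun (fun x => ∑ j ∈ s, P j x) = fun τ => ∑ j ∈ s, gfun (P j) τ := by
  classical
  induction s using Finset.induction with
  | empty =>
      simp only [Finset.sum_empty]
      show 𝓕⁻ (fun _ => (0:ℂ)) = _
      funext τ
      simp [Real.fourierInv_eq]
  | insert a s' hj ih =>
      simp only [Finset.sum_insert hj]
      have : (fun x => P a x + ∑ j ∈ s', P j x) = (fun x => P a x) + (fun x => ∑ j ∈ s', P j x) := rfl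
      rw [this]
      show 𝓕⁻ _ = _
      have h2 : (fun ξ : ℝ => ((fun x => P a x) + fun x => ∑ j ∈ s', P j x) (2*π*ξ))
          = (fun ξ : ℝ => P a (2*π*ξ)) + (fun ξ : ℝ => ∑ j ∈ s', P j (2*π*ξ)) := rfl
      show VectorFourier.fourierIntegral 𝐞 volume (-innerₗ ℝ) _ = _
      rw [h2,
        VectorFourier.fourierIntegral_add Real.continuous_fourierChar (by exact (continuous_inner).neg)
          (hP a) ?_]
      · funext τ
        simp only [Pi.add_apply]
        have := congrFun ih τ
        exact congrArg₂ (· + ·) rfl this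
      · apply integrable_finset_sum
        intro j _
        exact hP j

lemma conv_tendsto_zero (φ : ℝ → ℂ) (hφc : Continuous φ) (C : ℝ) (hφb : ∀ t, ‖φ t‖ ≤ C)
    (l : Filter ℝ) (hsing : ∀ x : ℝ, NotSingAt l φ x)
    (G : ℝ → ℂ) (hG : ContDiff ℝ (⊤:ℕ∞) G) (hGs : HasCompactSupport G) :
    Tendsto (mconv volume (gfun G) φ) l (𝓝 0) := by
  classical
  choose cc dd hmem hconv using hsing
  set K := tsupport G with hKdef
  have hK : IsCompact K := hGs
  have hcover : K ⊆ ⋃ x : ℝ, Set.Ioo (cc x) (dd x) := fun y _ => mem_iUnion.2 ⟨y, hmem y⟩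
  obtain ⟨δ, hδ, hball⟩ :=
    lebesgue_number_lemma_of_metric hK (fun x => isOpen_Ioo) hcover
  obtain ⟨M₀, hM₀⟩ := (Metric.isBounded_iff_subset_closedBall 0).1 hK.isBounded
  set M : ℝ := max M₀ 0 with hMdef
  have hKM : K ⊆ Metric.closedBall 0 M :=
    hM₀.trans (Metric.closedBall_subset_closedBall (le_max_left _ _))
  have hδ2 : (0:ℝ) < δ / 2 := by linarith
  -- grid
  obtain ⟨m, hm⟩ := exists_nat_ge ((2*M + δ/2) / (δ/2))
  obtain ⟨lam, hlam_succ, hlam1, hMm⟩ :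
      ∃ lam : ℕ → ℝ, (∀ j : ℕ, lam (j+1) - lam j = δ/2) ∧ lam 1 = -M ∧ M ≤ lam m := by
    refine ⟨fun j => -M - δ/2 + j * (δ/2), ?_, by push_cast; ring, ?_⟩
    · intro j; push_cast; ring
    · rw [div_le_iff₀ hδ2] at hm
      push_cast
      linarith
  have hlam_mono : ∀ j k : ℕ, j ≤ k → lam j ≤ lam k := by
    have : Monotone lam := monotone_nat_of_le_succ (fun n => by have := hlam_succ n; linarith)
    exact fun j k h => this h
  have hθ1 : ∀ j : ℕ, ∀ x : ℝ, x ≤ lam j →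
      Real.smoothTransition ((lam (j+1) - x) / (δ/2)) = 1 := by
    intro j x hx
    apply Real.smoothTransition.one_of_one_le
    rw [le_div_iff₀ hδ2, one_mul]
    have h := hlam_succ j
    linarith
  have hθ0 : ∀ j : ℕ, ∀ x : ℝ, lam (j+1) ≤ x →
      Real.smoothTransition ((lam (j+1) - x) / (δ/2)) = 0 := by
    intro j x hx
    apply Real.smoothTransition.zero_of_nonpos
    apply div_nonpos_of_nonpos_of_nonneg <;> linarith
  set θ : ℕ → ℝ → ℝ := fun j x => Real.smoothTransition ((lam (j+1) - x) / (δ/2)) with hθdef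
  have hθ1' : ∀ j : ℕ, ∀ x : ℝ, x ≤ lam j → θ j x = 1 := by
    intro j x hx; simp only [hθdef]; exact hθ1 j x hx
  have hθ0' : ∀ j : ℕ, ∀ x : ℝ, lam (j+1) ≤ x → θ j x = 0 := by
    intro j x hx; simp only [hθdef]; exact hθ0 j x hx
  have hθsm : ∀ j : ℕ, ContDiff ℝ (⊤:ℕ∞) (θ j) := by
    intro j
    exact Real.smoothTransition.contDiff.comp
      ((contDiff_const.sub contDiff_id).div_const _)
  -- pieces
  set P : ℕ → ℝ → ℂ := fun j x => ((θ (j+1) x - θ j x : ℝ) : ℂ) * G x with hPdef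
  have hPsm : ∀ j, ContDiff ℝ (⊤:ℕ∞) (P j) := by
    intro j
    exact (Complex.ofRealCLM.contDiff.comp ((hθsm (j+1)).sub (hθsm j))).mul hG
  have hPs : ∀ j, HasCompactSupport (P j) := fun j => hGs.mul_left
  have hsumP : ∀ x : ℝ, ∑ j ∈ Finset.range m, P j x = G x := by
    intro x
    have htel : ∑ j ∈ Finset.range m, (θ (j+1) x - θ j x) = θ m x - θ 0 x :=
      Finset.sum_range_sub (fun j => θ j x) m
    have : ∑ j ∈ Finset.range m, P j x = ((θ m x - θ 0 x : ℝ) : ℂ) * G x := by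
      simp only [hPdef]
      rw [← Finset.sum_mul, ← Complex.ofReal_sum, htel]
    rw [this]
    by_cases hx : G x = 0
    · rw [hx, mul_zero]
    · have hxK : x ∈ K := subset_tsupport G (by exact hx)
      have hxM : x ∈ Metric.closedBall (0:ℝ) M := hKM hxK
      rw [Metric.mem_closedBall, Real.dist_eq, sub_zero] at hxM
      have h1 : θ m x = 1 := hθ1' m x (le_trans (abs_le.1 hxM).2 hMm)
      have h0 : θ 0 x = 0 := hθ0' 0 x (by rw [hlam1]; exact (abs_le.1 hxM).1)
      rw [h1, h0]; norm_num
  -- support location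
  have hsupploc : ∀ j : ℕ, ∃ x₀ : ℝ, tsupport (P j) ⊆ Set.Ioo (cc x₀) (dd x₀) := by
    intro j
    by_cases hne : (Function.support (P j)).Nonempty
    · obtain ⟨y, hy⟩ := hne
      rw [Function.mem_support] at hy
      have hGy : G y ≠ 0 := fun h => hy (by show ((_:ℝ):ℂ) * G y = 0; rw [h, mul_zero])
      have hθy : θ (j+1) y - θ j y ≠ 0 := fun h => hy (by
        show ((θ (j+1) y - θ j y : ℝ):ℂ) * G y = 0
        rw [h]; simp)
      have hyK : y ∈ K := subset_tsupport G hGy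
      have hy1 : lam j < y := by
        by_contra h
        push_neg at h
        apply hθy
        rw [hθ1' j y h, hθ1' (j+1) y (h.trans (hlam_mono j (j+1) (by omega))), sub_self]
      have hy2 : y < lam (j+2) := by
        by_contra h
        push_neg at h
        apply hθy
        rw [hθ0' (j+1) y h, hθ0' j y ((hlam_mono (j+1) (j+2) (by omega)).trans h), sub_self]
      obtain ⟨x₀, hx₀⟩ := hball y hyK
      refine ⟨x₀, ?_⟩
      have hsub : Function.support (P j) ⊆ Set.Icc (lam j) (lam (j+2)) := by
        intro z hz
        rw [Function.mem_support] at hz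
        have hθz : θ (j+1) z - θ j z ≠ 0 := fun h => hz (by
          show ((θ (j+1) z - θ j z : ℝ):ℂ) * G z = 0
          rw [h]; simp)
        constructor
        · by_contra h
          push_neg at h
          exact hθz (by rw [hθ1' j z h.le, hθ1' (j+1) z (h.le.trans (hlam_mono j (j+1) (by omega))), sub_self])
        · by_contra h
          push_neg at h
          exact hθz (by rw [hθ0' (j+1) z h.le, hθ0' j z ((hlam_mono (j+1) (j+2) (by omega)).trans h.le), sub_self])
      have htsub : tsupport (P j) ⊆ Set.Icc (lam j) (lam (j+2)) :=
        closure_minimal hsub isClosed_Icc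
      refine htsub.trans (fun z hz => hx₀ ?_)
      rw [Metric.mem_ball, Real.dist_eq]
      have hlen : lam (j+2) - lam j = δ := by
        have h1 := hlam_succ j
        have h2 := hlam_succ (j+1)
        have e2 : lam (j+1+1) = lam (j+2) := by norm_num
        linarith
      rw [abs_sub_lt_iff]
      constructor
      · have := hz.2; linarith
      · have := hz.1; linarith
    · rw [Set.not_nonempty_iff_eq_empty] at hne
      refine ⟨0, ?_⟩
      rw [tsupport, hne, closure_empty]
      exact empty_subset _
  -- each piece's convolution tends to zero
  have hPint : ∀ j, Integrable (fun ξ : ℝ => P j (2 * π * ξ)) := by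
    intro j
    have : HasCompactSupport (fun ξ : ℝ => P j (2*π*ξ)) :=
      (hPs j).comp_isClosedEmbedding (Homeomorph.mulLeft₀ (2*π) (by positivity)).isClosedEmbedding
    exact ((hPsm j).continuous.comp (continuous_const.mul continuous_id)).integrable_of_hasCompactSupport this
  have htend : ∀ j ∈ Finset.range m, Tendsto (mconv volume (gfun (P j)) φ) l (𝓝 0) := by
    intro j _
    obtain ⟨hPi, hPc, hPft⟩ := gfun_props (P j) (hPsm j) (hPs j)
    obtain ⟨x₀, hx₀⟩ := hsupploc j
    exact hconv x₀ volume (gfun (P j)) hPi (by rw [hPft]; exact hx₀)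
  -- sum identity for mconv
  have hgsum : ∀ τ : ℝ, gfun G τ = ∑ j ∈ Finset.range m, gfun (P j) τ := by
    intro τ
    have hGP : G = fun x => ∑ j ∈ Finset.range m, P j x := by
      funext x; rw [hsumP x]
    conv_lhs => rw [hGP]
    rw [gfun_sum (Finset.range m) P hPint]
  have hmconv_eq : ∀ t : ℝ, mconv volume (gfun G) φ t
      = ∑ j ∈ Finset.range m, mconv volume (gfun (P j)) φ t := by
    intro t
    rw [mconv]
    have : (fun τ => φ (t - τ) * gfun G τ)
        = fun τ => ∑ j ∈ Finset.range m, φ (t - τ) * gfun (P j) τ := by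
      funext τ
      rw [hgsum τ, Finset.mul_sum]
    rw [this, integral_finset_sum]
    · rfl
    · intro j _
      obtain ⟨hPi, hPc, _⟩ := gfun_props (P j) (hPsm j) (hPs j)
      exact hPi.bdd_mul ((hφc.comp (continuous_const.sub continuous_id)).aestronglyMeasurable)
        (Filter.Eventually.of_forall fun τ => hφb _)
  have hfin := tendsto_finset_sum (Finset.range m) htend
  simp only [Finset.sum_const, smul_zero] at hfin
  exact Tendsto.congr (fun t => (hmconv_eq t).symm) hfin

noncomputable def ψb : ContDiffBump (0:ℝ) := ⟨1, 2, one_pos, one_lt_two⟩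

noncomputable def GN (N : ℝ) : ℝ → ℂ := fun ξ => ((ψb (ξ / N) : ℝ) : ℂ)

lemma GN_smooth (N : ℝ) : ContDiff ℝ (⊤:ℕ∞) (GN N) := by
  apply Complex.ofRealCLM.contDiff.comp
  exact ψb.contDiff.comp (contDiff_id.div_const N)

lemma GN_cpt (N : ℝ) (hN : 0 < N) : HasCompactSupport (GN N) := by
  have h1 : HasCompactSupport (fun x : ℝ => ((ψb x : ℝ) : ℂ)) := by
    apply HasCompactSupport.comp_left (g := fun r : ℝ => (r : ℂ)) ψb.hasCompactSupport
    simp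
  have h2 : GN N = (fun x : ℝ => ((ψb x : ℝ) : ℂ)) ∘ (fun ξ : ℝ => N⁻¹ * ξ) := by
    funext ξ
    simp [GN, Function.comp, div_eq_inv_mul]
  rw [h2]
  exact h1.comp_isClosedEmbedding (Homeomorph.mulLeft₀ N⁻¹ (by positivity)).isClosedEmbedding

lemma hN_scale (N t : ℝ) (hN : 0 < N) : gfun (GN N) t = (N:ℝ) • gfun (GN 1) (N * t) := by
  have hne : N ≠ 0 := hN.ne'
  rw [gfun, gfun, Real.fourierInv_eq_fourier_neg,
    Real.fourierInv_eq_fourier_neg,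
    Real.fourier_real_eq_integral_exp_smul,
    Real.fourier_real_eq_integral_exp_smul]
  set q : ℝ → ℂ := fun u => Complex.exp (↑(-2*π*u*(-(N*t))) * Complex.I) • ((ψb ((2*π*u) / 1) : ℝ) : ℂ) with hq
  have hpt : ∀ v : ℝ, Complex.exp (↑(-2 * π * v * (-t)) * Complex.I) • GN N (2 * π * v) = q (v / N) := by
    intro v
    simp only [hq, GN]
    have e1 : -2*π*(v/N)*(-(N*t)) = -2*π*v*(-t) := by field_simp
    have e2 : (2*π*(v/N))/1 = (2*π*v)/N := by field_simp
    rw [e1, e2]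
  calc ∫ v, Complex.exp (↑(-2 * π * v * (-t)) * Complex.I) • GN N (2 * π * v)
      = ∫ v, q (v / N) := by simp_rw [hpt]
    _ = |N| • ∫ u, q u := Measure.integral_comp_div q N
    _ = N • ∫ u, Complex.exp (↑(-2*π*u*(-(N*t))) * Complex.I) • GN 1 (2*π*u) := by
        rw [abs_of_pos hN]; rfl

lemma integral_eq_mFT_zero (g : ℝ → ℂ) : ∫ τ, g τ = mFT volume g 0 := by
  rw [mFT]
  congr 1
  funext τ
  simp

lemma tail_small (h : ℝ → ℂ) (hi : Integrable h) {ε : ℝ} (hε : 0 < ε) :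
    ∃ n : ℕ, ∫ u in (Metric.closedBall (0:ℝ) n)ᶜ, ‖h u‖ < ε := by
  have hnorm : Integrable (fun u => ‖h u‖) := hi.norm
  have hmono : Monotone (fun n : ℕ => Metric.closedBall (0:ℝ) n) := by
    intro a b hab
    exact Metric.closedBall_subset_closedBall (by exact_mod_cast hab)
  have hunion : (⋃ n : ℕ, Metric.closedBall (0:ℝ) n) = Set.univ := by
    ext x
    simp only [Set.mem_iUnion, Set.mem_univ, iff_true]
    obtain ⟨n, hn⟩ := exists_nat_ge |x|
    exact ⟨n, by simpa [Metric.mem_closedBall, Real.dist_eq] using hn⟩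
  have htendsto : Tendsto (fun n : ℕ => ∫ u in Metric.closedBall (0:ℝ) n, ‖h u‖) atTop
      (𝓝 (∫ u, ‖h u‖)) := by
    have := MeasureTheory.tendsto_setIntegral_of_monotone
      (f := fun u => ‖h u‖) (μ := volume)
      (fun n : ℕ => measurableSet_closedBall) hmono (by rw [hunion]; exact hnorm.integrableOn)
    rwa [hunion, setIntegral_univ] at this
  have hcompl : ∀ n : ℕ, ∫ u in (Metric.closedBall (0:ℝ) n)ᶜ, ‖h u‖
      = (∫ u, ‖h u‖) - ∫ u in Metric.closedBall (0:ℝ) n, ‖h u‖ := by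
    intro n
    have := integral_add_compl (measurableSet_closedBall (x := (0:ℝ)) (ε := (n:ℝ))) hnorm
    linarith
  have : Tendsto (fun n : ℕ => ∫ u in (Metric.closedBall (0:ℝ) n)ᶜ, ‖h u‖) atTop (𝓝 0) := by
    simp_rw [hcompl]
    have := htendsto.const_sub (∫ u, ‖h u‖)
    simpa using this
  exact (this.eventually (eventually_lt_nhds hε)).exists


lemma GN_mass (N : ℝ) (hN : 0 < N) : ∫ τ, gfun (GN N) τ = 1 := by
  rw [integral_eq_mFT_zero, (gfun_props (GN N) (GN_smooth N) (GN_cpt N hN)).2.2]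
  show ((ψb ((0:ℝ) / N) : ℝ) : ℂ) = 1
  rw [zero_div]
  norm_cast
  exact ψb.one_of_mem_closedBall (by simpa using ψb.rIn_pos.le)

lemma err_bound (φ : ℝ → ℂ) (hφc : Continuous φ) (C : ℝ) (hC0 : 0 ≤ C) (hφb : ∀ t, ‖φ t‖ ≤ C)
    (N : ℝ) (hN1 : 1 ≤ N) (δ₀ ε₁ : ℝ) (hδ₀ : 0 < δ₀) (hε₁ : 0 ≤ ε₁)
    (hUC : ∀ a b : ℝ, |a - b| < δ₀ → ‖φ a - φ b‖ ≤ ε₁)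
    (n : ℕ) (hNδ : (n:ℝ) < N * δ₀) (t : ℝ) :
    ‖φ t - mconv volume (gfun (GN N)) φ t‖ ≤
      ε₁ * (∫ u, ‖gfun (GN 1) u‖)
        + 2*C*(∫ u in (Metric.closedBall (0:ℝ) n)ᶜ, ‖gfun (GN 1) u‖) := by
  have hN0 : (0:ℝ) < N := lt_of_lt_of_le one_pos hN1
  have hne : N ≠ 0 := hN0.ne'
  obtain ⟨h1i, h1c, _⟩ := gfun_props (GN 1) (GN_smooth 1) (GN_cpt 1 one_pos)
  obtain ⟨hNi, hNc, _⟩ := gfun_props (GN N) (GN_smooth N) (GN_cpt N hN0)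
  have hmass : ∫ τ, gfun (GN N) τ = 1 := GN_mass N hN0
  set hh := gfun (GN N) with hhdef
  set h1 := gfun (GN 1) with h1def
  -- step 1
  have hint1 : Integrable (fun τ => φ t * hh τ) := hNi.const_mul _
  have hint2 : Integrable (fun τ => φ (t - τ) * hh τ) :=
    hNi.bdd_mul ((hφc.comp (continuous_const.sub continuous_id)).aestronglyMeasurable)
      (Filter.Eventually.of_forall fun τ => hφb _)
  have step1 : φ t - mconv volume hh φ t = ∫ τ, (φ t - φ (t - τ)) * hh τ := by
    have e1 : φ t = ∫ τ, φ t * hh τ := by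
      rw [integral_const_mul, hmass, mul_one]
    rw [mconv]
    conv_lhs => rw [e1]
    rw [← integral_sub hint1 hint2]
    congr 1
    funext τ
    ring
  -- step 2
  have step2 : ‖φ t - mconv volume hh φ t‖ ≤ ∫ τ, ‖φ t - φ (t - τ)‖ * ‖hh τ‖ := by
    rw [step1]
    refine (norm_integral_le_integral_norm _).trans_eq ?_
    congr 1
    funext τ
    rw [norm_mul]
  -- step 3 : change of variables
  set w : ℝ → ℝ := fun u => ‖φ t - φ (t - u/N)‖ * ‖h1 u‖ with hwdef
  have hscale : ∀ τ : ℝ, ‖hh τ‖ = N * ‖h1 (N*τ)‖ := by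
    intro τ
    rw [hhdef, h1def, hN_scale N τ hN0, norm_smul, Real.norm_eq_abs, abs_of_pos hN0]
  have hw : ∀ τ : ℝ, ‖φ t - φ (t - τ)‖ * ‖hh τ‖ = N * w (N * τ) := by
    intro τ
    rw [hscale τ]
    simp only [hwdef]
    rw [mul_div_cancel_left₀ τ hne]
    ring
  have step3 : ∫ τ, ‖φ t - φ (t - τ)‖ * ‖hh τ‖ = ∫ u, w u := by
    simp_rw [hw]
    rw [integral_const_mul, Measure.integral_comp_mul_left w N, abs_inv,
      abs_of_pos hN0, smul_eq_mul]
    field_simp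
  -- step 4 : bound
  set bnd : ℝ → ℝ := fun u => ε₁ * ‖h1 u‖
      + Set.indicator (Metric.closedBall (0:ℝ) n)ᶜ (fun u => 2*C*‖h1 u‖) u with hbnddef
  have hwint : Integrable w := by
    have hwc : Continuous w := by
      apply Continuous.mul
      · exact (continuous_const.sub (hφc.comp (continuous_const.sub (continuous_id.div_const N)))).norm
      · exact h1c.norm
    apply (h1i.norm.const_mul (2*C)).mono' hwc.aestronglyMeasurable
    filter_upwards with u
    simp only [hwdef, Real.norm_eq_abs]
    rw [_root_.abs_of_nonneg (mul_nonneg (norm_nonneg _) (norm_nonneg _))]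
    apply mul_le_mul_of_nonneg_right _ (norm_nonneg _)
    calc ‖φ t - φ (t - u/N)‖ ≤ ‖φ t‖ + ‖φ (t - u/N)‖ := norm_sub_le _ _
      _ ≤ 2*C := by have := hφb t; have := hφb (t - u/N); linarith
  have hbint : Integrable bnd := by
    apply Integrable.add (h1i.norm.const_mul ε₁)
    exact ((h1i.norm.const_mul (2*C)).indicator measurableSet_closedBall.compl)
  have hwb : ∀ u : ℝ, w u ≤ bnd u := by
    intro u
    by_cases hu : u ∈ (Metric.closedBall (0:ℝ) n)ᶜ
    · rw [hbnddef]
      simp only [Set.indicator_of_mem hu]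
      have : w u ≤ 2*C*‖h1 u‖ := by
        apply mul_le_mul_of_nonneg_right _ (norm_nonneg _)
        calc ‖φ t - φ (t - u/N)‖ ≤ ‖φ t‖ + ‖φ (t - u/N)‖ := norm_sub_le _ _
          _ ≤ 2*C := by have := hφb t; have := hφb (t - u/N); linarith
      have h0 : 0 ≤ ε₁ * ‖h1 u‖ := mul_nonneg hε₁ (norm_nonneg _)
      linarith
    · rw [hbnddef]
      simp only [Set.indicator_of_notMem hu, add_zero]
      rw [Set.notMem_compl_iff, Metric.mem_closedBall, Real.dist_eq, sub_zero] at hu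
      apply mul_le_mul_of_nonneg_right _ (norm_nonneg _)
      apply hUC
      rw [sub_sub_cancel, abs_div, _root_.abs_of_pos hN0, div_lt_iff₀ hN0]
      calc |u| ≤ (n:ℝ) := hu
        _ < N * δ₀ := hNδ
        _ = δ₀ * N := mul_comm _ _
  have step4 : ∫ u, w u ≤ ∫ u, bnd u := integral_mono hwint hbint hwb
  have hbval : ∫ u, bnd u = ε₁ * (∫ u, ‖h1 u‖)
      + 2*C*(∫ u in (Metric.closedBall (0:ℝ) n)ᶜ, ‖h1 u‖) := by
    rw [hbnddef]
    rw [integral_add (h1i.norm.const_mul ε₁)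
      ((h1i.norm.const_mul (2*C)).indicator measurableSet_closedBall.compl)]
    rw [integral_const_mul, integral_indicator measurableSet_closedBall.compl,
      integral_const_mul]
  calc ‖φ t - mconv volume hh φ t‖ ≤ ∫ τ, ‖φ t - φ (t - τ)‖ * ‖hh τ‖ := step2
    _ = ∫ u, w u := step3
    _ ≤ ∫ u, bnd u := step4
    _ = _ := hbval

end Aux

/-- If `sing supp^⋆(φ̂) = ∅` for a bounded uniformly continuous
`φ : ℝ → ℂ`, then `φ(t) → 0` as `t → ⋆∞`. -/
theorem stmt_11 (φ : ℝ → ℂ) (hφu : UniformContinuous φ) (hφb : ∃ C, ∀ t, ‖φ t‖ ≤ C)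
    (l : Filter ℝ) (hl : l = atTop ∨ l = atBot)
    (hsing : ∀ x : ℝ, NotSingAt l φ x) :
    Tendsto φ l (𝓝 0) := by
  classical
  obtain ⟨C, hC⟩ := hφb
  have hC0 : 0 ≤ C := le_trans (norm_nonneg (φ 0)) (hC 0)
  have hφc : Continuous φ := hφu.continuous
  -- h1 basics
  obtain ⟨h1i, h1c, h1ft⟩ := gfun_props (GN 1) (GN_smooth 1) (GN_cpt 1 one_pos)
  set C₁ : ℝ := ∫ u, ‖gfun (GN 1) u‖ with hC₁def
  have hC₁0 : 0 ≤ C₁ := integral_nonneg (fun u => norm_nonneg _)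
  rw [NormedAddCommGroup.tendsto_nhds_zero]
  intro ε hε
  -- parameters
  set ε₁ : ℝ := ε / (4 * (C₁ + 1)) with hε₁def
  have hε₁pos : 0 < ε₁ := by positivity
  obtain ⟨δ₀, hδ₀, hUC0⟩ := Metric.uniformContinuous_iff.1 hφu ε₁ hε₁pos
  have hUC : ∀ a b : ℝ, |a - b| < δ₀ → ‖φ a - φ b‖ ≤ ε₁ := by
    intro a b hab
    have := hUC0 (a := a) (b := b) (by rwa [Real.dist_eq])
    rw [dist_eq_norm] at this
    exact this.le
  set εt : ℝ := ε / (8 * (C + 1)) with hεtdef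
  have hεtpos : 0 < εt := by positivity
  obtain ⟨n, hn⟩ := tail_small (gfun (GN 1)) h1i hεtpos
  set N : ℝ := max 1 ((n + 1) / δ₀) with hNdef
  have hN1 : 1 ≤ N := le_max_left _ _
  have hNδ : (n:ℝ) < N * δ₀ := by
    have h2 : (n + 1) / δ₀ ≤ N := le_max_right _ _
    rw [div_le_iff₀ hδ₀] at h2
    linarith
  -- error bound
  have herr : ∀ t : ℝ, ‖φ t - mconv volume (gfun (GN N)) φ t‖ ≤ ε / 2 := by
    intro t
    refine (err_bound φ hφc C hC0 hC N hN1 δ₀ ε₁ hδ₀ hε₁pos.le hUC n hNδ t).trans ?_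
    have e1 : ε₁ * C₁ ≤ ε / 4 := by
      rw [hε₁def]
      rw [div_mul_eq_mul_div, div_le_div_iff₀ (by positivity) (by norm_num)]
      nlinarith
    have e2 : 2*C*(∫ u in (Metric.closedBall (0:ℝ) n)ᶜ, ‖gfun (GN 1) u‖) ≤ ε / 4 := by
      have htn : (0:ℝ) ≤ ∫ u in (Metric.closedBall (0:ℝ) n)ᶜ, ‖gfun (GN 1) u‖ :=
        integral_nonneg (fun u => norm_nonneg _)
      calc 2*C*(∫ u in (Metric.closedBall (0:ℝ) n)ᶜ, ‖gfun (GN 1) u‖)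
          ≤ 2*C*εt := by
            apply mul_le_mul_of_nonneg_left hn.le (by linarith)
        _ ≤ ε / 4 := by
            rw [hεtdef, ← mul_div_assoc, div_le_div_iff₀ (by positivity) (by norm_num)]
            nlinarith
    linarith
  -- convolution tends to zero
  have hN0 : (0:ℝ) < N := lt_of_lt_of_le one_pos hN1
  have htend : Tendsto (mconv volume (gfun (GN N)) φ) l (𝓝 0) :=
    conv_tendsto_zero φ hφc C hC l hsing (GN N) (GN_smooth N) (GN_cpt N hN0)
  have hev : ∀ᶠ t in l, ‖mconv volume (gfun (GN N)) φ t‖ < ε / 2 := by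
    have := htend.norm
    rw [norm_zero] at this
    exact this.eventually (eventually_lt_nhds (by positivity))
  filter_upwards [hev] with t ht
  calc ‖φ t‖ = ‖(φ t - mconv volume (gfun (GN N)) φ t) + mconv volume (gfun (GN N)) φ t‖ := by
        congr 1; ring
    _ ≤ ‖φ t - mconv volume (gfun (GN N)) φ t‖ + ‖mconv volume (gfun (GN N)) φ t‖ :=
        norm_add_le _ _
    _ < ε / 2 + ε / 2 := by
        have := herr t
        apply add_lt_add_of_le_of_lt this ht
    _ = ε := by ring
end
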